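/- arXiv:0903.0503 — 3 statements merged into one kernel-verified Lean document; each statement's English description precedes it below -/
import Mathlib

section
/- Let T be an invertible measure-preserving transformation of a standard Borel probability space (X, ℬ, μ). Suppose that for every ε > 0 and all nonnegative f₁, f₂ ∈ L¹(X, μ) there exist s ≥ 1, integers n₁, …, n_s, nonnegative reals λ_{j,k} (j = 1, 2; 1 ≤ k ≤ s) and a nonnegative f ∈ L¹(X, μ) such that ‖f_j − ∑_{k=1}^{s} λ_{j,k} f∘T^{n_k}‖_{L¹} < ε for j = 1, 2. Then T is approximately transitive, i.e. the same approximation property holds for every finite family f₁, …, f_l of nonnegative L¹ functions, l ≥ 2. -/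
open MeasureTheory
section Helpers
variable {X : Type*} [MeasurableSpace X] {μ : Measure X} {T : Equiv.Perm X}

lemma mpz (hT : MeasurePreserving T μ μ) (hTs : MeasurePreserving T.symm μ μ) (n : ℤ) :
    MeasurePreserving (⇑(T^n)) μ μ := by
  induction n using Int.induction_on with
  | zero => simpa using MeasurePreserving.id μ
  | succ k ih =>
      rw [zpow_add_one]
      have : ⇑(T^(k:ℤ) * T) = ⇑(T^(k:ℤ)) ∘ ⇑T := rfl
      rw [this]; exact ih.comp hT
  | pred k ih =>
      rw [zpow_sub_one]
      have : ⇑(T^(-k:ℤ) * T⁻¹) = ⇑(T^(-k:ℤ)) ∘ ⇑T.symm := by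
        rw [Equiv.Perm.inv_def]; rfl
      rw [this]; exact ih.comp hTs

lemma embz (hT : MeasurePreserving T μ μ) (hTs : MeasurePreserving T.symm μ μ) (n : ℤ) :
    MeasurableEmbedding (⇑(T^n)) := by
  have hsymm : ((T^n : Equiv.Perm X).symm : X → X) = ⇑(T^(-n)) := by
    rw [← Equiv.Perm.inv_def, ← zpow_neg]
  exact MeasurableEquiv.measurableEmbedding
    ⟨T^n, (mpz hT hTs n).measurable, by rw [show ((T^n : Equiv.Perm X) : Equiv X X).symm = ⇑(T^(-n)) from hsymm]; exact (mpz hT hTs (-n)).measurable⟩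

lemma intcomp (hT : MeasurePreserving T μ μ) (hTs : MeasurePreserving T.symm μ μ) (n : ℤ)
    {u : X → ℝ} (hu : Integrable u μ) : Integrable (fun x => u ((T^n) x)) μ :=
  ((mpz hT hTs n).integrable_comp_emb (embz hT hTs n)).2 hu

lemma intz (hT : MeasurePreserving T μ μ) (hTs : MeasurePreserving T.symm μ μ) (n : ℤ)
    (φ : X → ℝ) : ∫ x, φ ((T^n) x) ∂μ = ∫ x, φ x ∂μ :=
  (mpz hT hTs n).integral_comp (embz hT hTs n) φ

lemma key (hT : MeasurePreserving T μ μ) (hTsymm : MeasurePreserving T.symm μ μ)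
    (H : ∀ ε : ℝ, 0 < ε → ∀ f₁ f₂ : X → ℝ,
      Integrable f₁ μ → Integrable f₂ μ → (∀ x, 0 ≤ f₁ x) → (∀ x, 0 ≤ f₂ x) →
      ∃ s : ℕ, 1 ≤ s ∧ ∃ (n : Fin s → ℤ) (lam₁ lam₂ : Fin s → ℝ) (g : X → ℝ),
        Integrable g μ ∧ (∀ x, 0 ≤ g x) ∧ (∀ k, 0 ≤ lam₁ k) ∧ (∀ k, 0 ≤ lam₂ k) ∧
        (∫ x, |f₁ x - ∑ k, lam₁ k * g ((T ^ n k) x)| ∂μ < ε) ∧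
        (∫ x, |f₂ x - ∑ k, lam₂ k * g ((T ^ n k) x)| ∂μ < ε)) :
    ∀ l : ℕ, 1 ≤ l → ∀ ε : ℝ, 0 < ε → ∀ f : Fin l → X → ℝ,
    (∀ j, Integrable (f j) μ) → (∀ j x, 0 ≤ f j x) →
    ∃ s : ℕ, 1 ≤ s ∧ ∃ (n : Fin s → ℤ) (lam : Fin l → Fin s → ℝ) (g : X → ℝ),
      Integrable g μ ∧ (∀ x, 0 ≤ g x) ∧ (∀ j k, 0 ≤ lam j k) ∧
      ∀ j, ∫ x, |f j x - ∑ k, lam j k * g ((T ^ n k) x)| ∂μ < ε := by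
  intro l hl
  induction l, hl using Nat.le_induction with
  | base =>
      intro ε hε f hInt hPos
      obtain ⟨s, hs, n, lam₁, lam₂, g, hg, hgpos, hl1, hl2, h1, h2⟩ :=
        H ε hε (f 0) (f 0) (hInt 0) (hInt 0) (hPos 0) (hPos 0)
      refine ⟨s, hs, n, fun _ => lam₁, g, hg, hgpos, fun _ => hl1, fun j => ?_⟩
      have : j = 0 := Subsingleton.elim _ _
      rw [this]; exact h1
  | succ l hl ih =>
      intro ε hε f hInt hPos
      obtain ⟨s, hs1, n, lam, g, hg, hgpos, hlam, happ⟩ :=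
        ih (ε/2) (by positivity) (fun j => f j.castSucc) (fun j => hInt _) (fun j => hPos _)
      set Λ : ℝ := ∑ j, ∑ k, lam j k with hΛ
      have hΛ0 : 0 ≤ Λ := Finset.sum_nonneg fun j _ => Finset.sum_nonneg fun k _ => hlam j k
      have hrow : ∀ j, ∑ k, lam j k ≤ Λ := by
        intro j
        exact Finset.single_le_sum (f := fun j => ∑ k, lam j k)
          (fun i _ => Finset.sum_nonneg fun k _ => hlam i k) (Finset.mem_univ j)
      set δ : ℝ := min ε (ε / (2 * (Λ + 1))) with hδdef
      have hδ : 0 < δ := by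
        apply lt_min hε; positivity
      obtain ⟨s', hs'1, m, lam₁, lam₂, h, hh, hhpos, hμ₁, hμ₂, hgapp, hfapp⟩ :=
        H δ hδ g (f (Fin.last l)) hg (hInt _) hgpos (hPos _)
      refine ⟨s * s' + s', le_trans hs'1 (Nat.le_add_left _ _), ?_⟩
      set N : Fin (s * s' + s') → ℤ :=
        Fin.addCases (fun i => m (finProdFinEquiv.symm i).2 + n (finProdFinEquiv.symm i).1) m with hN
      set lam' : Fin (l+1) → Fin (s * s' + s') → ℝ :=
        fun j => Fin.lastCases (Fin.addCases (fun _ => (0:ℝ)) lam₂)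
          (fun j₀ => Fin.addCases
            (fun i => lam j₀ (finProdFinEquiv.symm i).1 * lam₁ (finProdFinEquiv.symm i).2)
            (fun _ => (0:ℝ))) j with hlam'
      refine ⟨N, lam', h, hh, hhpos, ?_, ?_⟩
      · intro j k
        induction j using Fin.lastCases with
        | last =>
            simp only [hlam', Fin.lastCases_last]
            induction k using Fin.addCases with
            | left k => simp
            | right k => simp [hμ₂ k]
        | cast j₀ =>
            simp only [hlam', Fin.lastCases_castSucc]
            induction k using Fin.addCases with
            | left k => simp [mul_nonneg (hlam _ _) (hμ₁ _)]
            | right k => simp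
      · intro j
        induction j using Fin.lastCases with
        | last =>
            have hsum : ∀ x, ∑ k, lam' (Fin.last l) k * h ((T ^ N k) x)
                = ∑ p, lam₂ p * h ((T ^ m p) x) := by
              intro x
              rw [Fin.sum_univ_add]
              simp [hlam', hN, Fin.lastCases_last]
            simp_rw [hsum]
            exact lt_of_lt_of_le hfapp (min_le_left _ _)
        | cast j₀ =>
            -- j = castSucc j₀
            set G : X → ℝ := fun x => ∑ p, lam₁ p * h ((T ^ m p) x) with hGdef
            set B : X → ℝ := fun x => ∑ k, lam j₀ k * g ((T ^ n k) x) with hBdef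
            set A : X → ℝ := fun x => ∑ k, lam j₀ k * G ((T ^ n k) x) with hAdef
            have hgT : ∀ k, Integrable (fun x => g ((T ^ n k) x)) μ :=
              fun k => intcomp hT hTsymm (n k) hg
            have hGint : Integrable G μ := by
              rw [hGdef]
              exact integrable_finset_sum _ fun p _ =>
                (intcomp hT hTsymm (m p) hh).const_mul _
            have hGT : ∀ k, Integrable (fun x => G ((T ^ n k) x)) μ :=
              fun k => intcomp hT hTsymm (n k) hGint
            have hB : Integrable B μ := by
              rw [hBdef]; exact integrable_finset_sum _ fun k _ => (hgT k).const_mul _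
            have hA : Integrable A μ := by
              rw [hAdef]; exact integrable_finset_sum _ fun k _ => (hGT k).const_mul _
            have hf : Integrable (f j₀.castSucc) μ := hInt _
            have hC : ∀ x, ∑ i, lam' j₀.castSucc i * h ((T ^ N i) x) = A x := by
              intro x
              rw [Fin.sum_univ_add]
              simp only [hlam', hN, Fin.lastCases_castSucc, Fin.addCases_left,
                Fin.addCases_right, zero_mul, Finset.sum_const_zero, add_zero]
              rw [← Equiv.sum_comp finProdFinEquiv
                (fun i => lam j₀ (finProdFinEquiv.symm i).1 * lam₁ (finProdFinEquiv.symm i).2 *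
                  h ((T ^ (m (finProdFinEquiv.symm i).2 + n (finProdFinEquiv.symm i).1)) x))]
              simp only [Equiv.symm_apply_apply]
              rw [Fintype.sum_prod_type]
              simp only [hAdef, hGdef, zpow_add, Equiv.Perm.mul_apply, Finset.mul_sum, mul_assoc]
            have hgG : ∫ x, |g x - G x| ∂μ < δ := hgapp
            have hcomp : ∀ k, ∫ x, |g ((T ^ n k) x) - G ((T ^ n k) x)| ∂μ
                = ∫ x, |g x - G x| ∂μ :=
              fun k => intz hT hTsymm (n k) (fun y => |g y - G y|)
            have habs : ∀ k, Integrable (fun x => |g ((T ^ n k) x) - G ((T ^ n k) x)|) μ :=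
              fun k => ((hgT k).sub (hGT k)).abs
            have habs1 : Integrable (fun x => |f j₀.castSucc x - B x|) μ := (hf.sub hB).abs
            have habs2 : Integrable (fun x => |B x - A x|) μ := (hB.sub hA).abs
            have step2 : ∫ x, |B x - A x| ∂μ ≤ Λ * δ := by
              have pw : ∀ x, |B x - A x|
                  ≤ ∑ k, lam j₀ k * |g ((T ^ n k) x) - G ((T ^ n k) x)| := by
                intro x
                have hd : B x - A x
                    = ∑ k, lam j₀ k * (g ((T ^ n k) x) - G ((T ^ n k) x)) := by
                  simp [hBdef, hAdef, mul_sub, Finset.sum_sub_distrib]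
                rw [hd]
                refine (Finset.abs_sum_le_sum_abs _ _).trans (le_of_eq ?_)
                exact Finset.sum_congr rfl fun k _ => by
                  rw [abs_mul, abs_of_nonneg (hlam j₀ k)]
              calc ∫ x, |B x - A x| ∂μ
                  ≤ ∫ x, ∑ k, lam j₀ k * |g ((T ^ n k) x) - G ((T ^ n k) x)| ∂μ :=
                    integral_mono (hB.sub hA).abs
                      (integrable_finset_sum _ fun k _ =>
                        (habs k).const_mul _) pw
                _ = ∑ k, lam j₀ k * ∫ x, |g ((T ^ n k) x) - G ((T ^ n k) x)| ∂μ := by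
                    rw [integral_finset_sum _ fun k _ => (habs k).const_mul _]
                    simp_rw [integral_const_mul]
                _ = ∑ k, lam j₀ k * ∫ x, |g x - G x| ∂μ := by simp_rw [hcomp]
                _ ≤ ∑ k, lam j₀ k * δ :=
                    Finset.sum_le_sum fun k _ => mul_le_mul_of_nonneg_left hgG.le (hlam j₀ k)
                _ = (∑ k, lam j₀ k) * δ := by rw [Finset.sum_mul]
                _ ≤ Λ * δ := mul_le_mul_of_nonneg_right (hrow j₀) hδ.le
            have hΛδ : Λ * δ ≤ ε / 2 := by
              have h1 : δ ≤ ε / (2 * (Λ + 1)) := min_le_right _ _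
              have h2 : Λ * δ ≤ Λ * (ε / (2 * (Λ + 1))) :=
                mul_le_mul_of_nonneg_left h1 hΛ0
              have h3 : Λ * (ε / (2 * (Λ + 1))) ≤ (Λ + 1) * (ε / (2 * (Λ + 1))) := by
                have := hε.le
                nlinarith [div_nonneg hε.le (by positivity : (0:ℝ) ≤ 2 * (Λ + 1))]
              have h4 : (Λ + 1) * (ε / (2 * (Λ + 1))) = ε / 2 := by
                field_simp
              linarith
            have step1 : ∫ x, |f j₀.castSucc x - B x| ∂μ < ε / 2 := happ j₀
            have tri : ∫ x, |f j₀.castSucc x - A x| ∂μ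
                ≤ ∫ x, |f j₀.castSucc x - B x| ∂μ + ∫ x, |B x - A x| ∂μ := by
              rw [← integral_add habs1 habs2]
              exact integral_mono (hf.sub hA).abs (habs1.add habs2)
                fun x => abs_sub_le _ _ _
            calc ∫ x, |f j₀.castSucc x - ∑ i, lam' j₀.castSucc i * h ((T ^ N i) x)| ∂μ
                = ∫ x, |f j₀.castSucc x - A x| ∂μ := by simp_rw [hC]
              _ ≤ ∫ x, |f j₀.castSucc x - B x| ∂μ + ∫ x, |B x - A x| ∂μ := tri
              _ < ε / 2 + Λ * δ := by linarith
              _ ≤ ε / 2 + ε / 2 := by linarith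
              _ = ε := by ring

end Helpers

/-- A (invertible) transformation `T` of `(X, μ)` is *approximately transitive* (AT) if for
every `ε > 0`, every `l ≥ 2` and all nonnegative integrable `f₁, …, f_l`, there are `s ≥ 1`,
integers `n₁, …, n_s`, nonnegative reals `λ_{j,k}` and a nonnegative integrable `f` such that
`‖f_j − ∑_k λ_{j,k} f∘T^{n_k}‖_{L¹} < ε` for all `j`. -/
def IsAT {X : Type*} [MeasurableSpace X] (μ : Measure X) (T : Equiv.Perm X) : Prop :=
  ∀ ε : ℝ, 0 < ε → ∀ l : ℕ, 2 ≤ l → ∀ f : Fin l → X → ℝ,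
    (∀ j, Integrable (f j) μ) → (∀ j x, 0 ≤ f j x) →
    ∃ s : ℕ, 1 ≤ s ∧ ∃ (n : Fin s → ℤ) (lam : Fin l → Fin s → ℝ) (g : X → ℝ),
      Integrable g μ ∧ (∀ x, 0 ≤ g x) ∧ (∀ j k, 0 ≤ lam j k) ∧
      ∀ j, ∫ x, |f j x - ∑ k, lam j k * g ((T ^ n k) x)| ∂μ < ε

/-- If the approximation property defining approximate transitivity holds for every pair of
nonnegative `L¹` functions, then it holds for every finite family, i.e. `T` is AT. -/
theorem stmt0 {X : Type*} [MeasurableSpace X] [StandardBorelSpace X] (μ : Measure X) [IsProbabilityMeasure μ]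
    (T : Equiv.Perm X) (hT : MeasurePreserving T μ μ)
    (hTsymm : MeasurePreserving T.symm μ μ)
    (H : ∀ ε : ℝ, 0 < ε → ∀ f₁ f₂ : X → ℝ,
      Integrable f₁ μ → Integrable f₂ μ → (∀ x, 0 ≤ f₁ x) → (∀ x, 0 ≤ f₂ x) →
      ∃ s : ℕ, 1 ≤ s ∧ ∃ (n : Fin s → ℤ) (lam₁ lam₂ : Fin s → ℝ) (g : X → ℝ),
        Integrable g μ ∧ (∀ x, 0 ≤ g x) ∧ (∀ k, 0 ≤ lam₁ k) ∧ (∀ k, 0 ≤ lam₂ k) ∧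
        (∫ x, |f₁ x - ∑ k, lam₁ k * g ((T ^ n k) x)| ∂μ < ε) ∧
        (∫ x, |f₂ x - ∑ k, lam₂ k * g ((T ^ n k) x)| ∂μ < ε)) :
    IsAT μ T := by
  intro ε hε l hl f hInt hPos
  exact key hT hTsymm H l (by omega) ε hε f hInt hPos
end

section
/- A Borel probability measure μ on the unit circle is a Rajchman measure if and only if for every strictly increasing sequence (n_k)_{k≥1} of positive integers one has ∫ |(1/k) ∑_{j=1}^{k} z^{n_j}|² dμ(z) → 0 as k → ∞. -/
open MeasureTheory Filter Complex

noncomputable instance : MeasurableSpace Circle := borel Circle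
instance : BorelSpace Circle := ⟨rfl⟩

/-- A finite Borel measure on the unit circle is *Rajchman* if its Fourier coefficients
`μ̂(n) = ∫ zⁿ dμ(z)` tend to `0` as `|n| → ∞`. -/
def IsRajchman (μ : Measure Circle) : Prop :=
  Tendsto (fun n : ℤ => ∫ z, (z : ℂ) ^ n ∂μ) cofinite (nhds 0)


lemma contZpow (m : ℤ) : Continuous fun z : Circle => (z : ℂ) ^ m :=
  continuous_subtype_val.zpow₀ m fun z => Or.inl (Circle.coe_ne_zero z)

lemma intZpow (μ : Measure Circle) [IsProbabilityMeasure μ] (m : ℤ) :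
    Integrable (fun z : Circle => (z : ℂ) ^ m) μ :=
  (contZpow m).integrable_of_hasCompactSupport (isClosed_tsupport _).isCompact

lemma keyId (μ : Measure Circle) [IsProbabilityMeasure μ] (n : ℕ → ℕ) (k : ℕ) :
    ∫ z, ‖(k : ℂ)⁻¹ * ∑ j ∈ Finset.range k, (z : ℂ) ^ (n j)‖ ^ 2 ∂μ
      = ((k : ℝ)⁻¹) ^ 2 * ∑ i ∈ Finset.range k, ∑ j ∈ Finset.range k,
          (∫ z, (z : ℂ) ^ ((n i : ℤ) - (n j : ℤ)) ∂μ).re := by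
  have hS : ∀ z : Circle, (∑ j ∈ Finset.range k, (z:ℂ)^(n j)) *
      (starRingEnd ℂ) (∑ j ∈ Finset.range k, (z:ℂ)^(n j))
      = ∑ i ∈ Finset.range k, ∑ j ∈ Finset.range k, (z:ℂ)^((n i : ℤ) - (n j : ℤ)) := by
    intro z
    rw [map_sum, Finset.sum_mul_sum]
    refine Finset.sum_congr rfl fun i _ => Finset.sum_congr rfl fun j _ => ?_
    have hz : (starRingEnd ℂ) ((z:ℂ)^(n j)) = (z:ℂ)^(-(n j : ℤ)) := by
      rw [map_pow, ← Circle.coe_inv_eq_conj, Circle.coe_inv, inv_pow, zpow_neg, zpow_natCast]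
    rw [hz, ← zpow_natCast (z:ℂ) (n i), ← zpow_add₀ (Circle.coe_ne_zero z), sub_eq_add_neg]
  have hint : Integrable (fun z : Circle =>
      (∑ j ∈ Finset.range k, (z:ℂ)^(n j)) * (starRingEnd ℂ) (∑ j ∈ Finset.range k, (z:ℂ)^(n j))) μ := by
    simp only [hS]
    exact integrable_finset_sum _ fun i _ => integrable_finset_sum _ fun j _ => intZpow μ _
  have h1 : ∀ z : Circle, ‖(k : ℂ)⁻¹ * ∑ j ∈ Finset.range k, (z : ℂ) ^ (n j)‖ ^ 2
      = ((k : ℝ)⁻¹) ^ 2 * ((∑ j ∈ Finset.range k, (z:ℂ)^(n j)) *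
        (starRingEnd ℂ) (∑ j ∈ Finset.range k, (z:ℂ)^(n j))).re := by
    intro z
    rw [norm_mul, mul_pow, Complex.mul_conj', ← Complex.ofReal_pow, Complex.ofReal_re]
    simp
  simp only [h1]
  rw [integral_const_mul]
  have hre := integral_re (𝕜 := ℂ) hint
  simp only [RCLike.re_to_complex] at hre
  rw [hre]
  congr 1
  simp only [hS]
  rw [integral_finset_sum _ fun i _ => integrable_finset_sum _ fun j _ => intZpow μ _,
    Complex.re_sum]
  exact Finset.sum_congr rfl fun i _ => by
    rw [integral_finset_sum _ fun j _ => intZpow μ _, Complex.re_sum]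

lemma normFour (μ : Measure Circle) [IsProbabilityMeasure μ] (m : ℤ) :
    ‖∫ z, (z : ℂ) ^ m ∂μ‖ ≤ 1 := by
  calc ‖∫ z, (z : ℂ) ^ m ∂μ‖ ≤ ∫ z, ‖(z : ℂ) ^ m‖ ∂μ := norm_integral_le_integral_norm _
  _ = 1 := by
    have : ∀ z : Circle, ‖(z : ℂ) ^ m‖ = 1 := fun z => by rw [norm_zpow]; simp [Circle.norm_coe]
    simp [this]

lemma avg_tendsto (a : ℤ → ℂ) (ha1 : ∀ m, ‖a m‖ ≤ 1) (ha : Tendsto a cofinite (nhds 0))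
    (n : ℕ → ℕ) (hn : StrictMono n) :
    Tendsto (fun k : ℕ => ((k:ℝ)⁻¹)^2 * ∑ i ∈ Finset.range k, ∑ j ∈ Finset.range k,
      (a ((n i : ℤ) - (n j : ℤ))).re) atTop (nhds 0) := by
  classical
  apply squeeze_zero_norm (a := fun k : ℕ => ((k:ℝ)⁻¹)^2 * ∑ i ∈ Finset.range k,
    ∑ j ∈ Finset.range k, ‖a ((n i : ℤ) - (n j : ℤ))‖)
  · intro k
    rw [Real.norm_eq_abs, abs_mul, _root_.abs_of_nonneg (by positivity : (0:ℝ) ≤ ((k:ℝ)⁻¹)^2)]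
    refine mul_le_mul_of_nonneg_left ?_ (by positivity)
    refine (Finset.abs_sum_le_sum_abs _ _).trans ?_
    refine Finset.sum_le_sum fun i _ => ?_
    refine (Finset.abs_sum_le_sum_abs _ _).trans ?_
    refine Finset.sum_le_sum fun j _ => ?_
    skip
    exact Complex.abs_re_le_norm _
  · rw [Metric.tendsto_atTop]
    intro ε hε
    have hT : {m : ℤ | ε/2 ≤ ‖a m‖}.Finite := by
      have h2 : a ⁻¹' (Metric.ball 0 (ε/2)) ∈ (cofinite : Filter ℤ) :=
        ha (Metric.ball_mem_nhds 0 (by positivity))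
      rw [mem_cofinite] at h2
      refine h2.subset fun m hm => ?_
      simp only [Set.mem_compl_iff, Set.mem_preimage, Metric.mem_ball, dist_zero_right, not_lt]
      exact hm
    set t : ℕ := hT.toFinset.card with ht
    obtain ⟨N, hN⟩ := exists_nat_gt ((t:ℝ) / (ε/2))
    refine ⟨max N 1, fun k hk => ?_⟩
    have hk1 : 1 ≤ k := le_trans (le_max_right _ _) hk
    have hkN : (N:ℝ) ≤ (k:ℝ) := Nat.cast_le.2 (le_trans (le_max_left _ _) hk)
    have hkpos : (0:ℝ) < (k:ℝ) := by exact_mod_cast hk1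
    have inner : ∀ i : ℕ, ∑ j ∈ Finset.range k, ‖a ((n i : ℤ) - (n j : ℤ))‖
        ≤ (t:ℝ) + (k:ℝ) * (ε/2) := by
      intro i
      rw [← Finset.sum_filter_add_sum_filter_not (Finset.range k)
        (fun j => ((n i : ℤ) - (n j : ℤ)) ∈ hT.toFinset)]
      refine add_le_add ?_ ?_
      · calc ∑ j ∈ (Finset.range k).filter (fun j => ((n i : ℤ) - (n j : ℤ)) ∈ hT.toFinset),
              ‖a ((n i : ℤ) - (n j : ℤ))‖
            ≤ ∑ _j ∈ (Finset.range k).filter (fun j => ((n i : ℤ) - (n j : ℤ)) ∈ hT.toFinset),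
              (1:ℝ) := Finset.sum_le_sum fun j _ => ha1 _
          _ = ((Finset.range k).filter
                (fun j => ((n i : ℤ) - (n j : ℤ)) ∈ hT.toFinset)).card := by
                simp
          _ ≤ (t:ℝ) := by
                rw [ht]
                have hcard : ((Finset.range k).filter
                    (fun j => ((n i : ℤ) - (n j : ℤ)) ∈ hT.toFinset)).card
                    ≤ hT.toFinset.card := by
                  apply Finset.card_le_card_of_injOn (fun j : ℕ => (n i : ℤ) - (n j : ℤ))
                  · intro j hj
                    exact (Finset.mem_filter.1 hj).2
                  · intro j₁ _ j₂ _ h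
                    simp only at h
                    exact hn.injective (by omega)
                exact_mod_cast hcard
      · calc ∑ j ∈ (Finset.range k).filter (fun j => ((n i : ℤ) - (n j : ℤ)) ∉ hT.toFinset),
              ‖a ((n i : ℤ) - (n j : ℤ))‖
            ≤ ∑ _j ∈ (Finset.range k).filter (fun j => ((n i : ℤ) - (n j : ℤ)) ∉ hT.toFinset),
              (ε/2) := by
                refine Finset.sum_le_sum fun j hj => ?_
                have hm := (Finset.mem_filter.1 hj).2
                rw [Set.Finite.mem_toFinset] at hm
                exact le_of_not_ge hm
          _ ≤ (k:ℝ) * (ε/2) := by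
                rw [Finset.sum_const, nsmul_eq_mul]
                refine mul_le_mul_of_nonneg_right ?_ (by positivity)
                exact_mod_cast (Finset.card_filter_le _ _).trans (Finset.card_range k).le
    have hsum : ∑ i ∈ Finset.range k, ∑ j ∈ Finset.range k, ‖a ((n i : ℤ) - (n j : ℤ))‖
        ≤ (k:ℝ) * ((t:ℝ) + (k:ℝ) * (ε/2)) := by
      calc _ ≤ ∑ _i ∈ Finset.range k, ((t:ℝ) + (k:ℝ) * (ε/2)) :=
            Finset.sum_le_sum fun i _ => inner i
        _ = (k:ℝ) * ((t:ℝ) + (k:ℝ) * (ε/2)) := by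
            rw [Finset.sum_const, nsmul_eq_mul, Finset.card_range]
    have hg : ((k:ℝ)⁻¹)^2 * ∑ i ∈ Finset.range k, ∑ j ∈ Finset.range k,
        ‖a ((n i : ℤ) - (n j : ℤ))‖ ≤ (t:ℝ)/(k:ℝ) + ε/2 := by
      calc _ ≤ ((k:ℝ)⁻¹)^2 * ((k:ℝ) * ((t:ℝ) + (k:ℝ) * (ε/2))) :=
            mul_le_mul_of_nonneg_left hsum (by positivity)
        _ = (t:ℝ)/(k:ℝ) + ε/2 := by field_simp
    rw [Real.dist_eq, sub_zero, _root_.abs_of_nonneg (by positivity)]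
    refine lt_of_le_of_lt hg ?_
    have htk : (t:ℝ)/(k:ℝ) < ε/2 := by
      rw [div_lt_iff₀ hkpos]
      have h1 : (t:ℝ) < (N:ℝ) * (ε/2) :=
        (div_lt_iff₀ (show (0:ℝ) < ε/2 by positivity)).1 hN
      nlinarith [mul_le_mul_of_nonneg_left hkN (le_of_lt (show (0:ℝ) < ε/2 by positivity))]
    linarith
lemma intPow (μ : Measure Circle) [IsProbabilityMeasure μ] (m : ℕ) :
    Integrable (fun z : Circle => (z : ℂ) ^ m) μ := by
  simpa using intZpow μ m

lemma sq_norm_int_le (μ : Measure Circle) [IsProbabilityMeasure μ] (f : Circle → ℂ)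
    (hm : AEStronglyMeasurable f μ) (hb : ∀ z, ‖f z‖ ≤ 1) :
    ‖∫ z, f z ∂μ‖ ^ 2 ≤ ∫ z, ‖f z‖ ^ 2 ∂μ := by
  have hX : MemLp (fun z => ‖f z‖) 2 μ :=
    MemLp.of_bound hm.norm 1 (Eventually.of_forall fun z => by simpa using hb z)
  have hvar := ProbabilityTheory.variance_nonneg (fun z => ‖f z‖) μ
  rw [ProbabilityTheory.variance_eq_sub hX] at hvar
  have h2 : (∫ z, ‖f z‖ ∂μ) ^ 2 ≤ ∫ z, ‖f z‖ ^ 2 ∂μ := by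
    simp only [Pi.pow_apply] at hvar
    linarith
  calc ‖∫ z, f z ∂μ‖ ^ 2 ≤ (∫ z, ‖f z‖ ∂μ) ^ 2 := by
        have := norm_integral_le_integral_norm (μ := μ) f
        have h0 : (0:ℝ) ≤ ‖∫ z, f z ∂μ‖ := norm_nonneg _
        nlinarith
    _ ≤ _ := h2

lemma bound_one (k : ℕ) (n : ℕ → ℕ) (z : Circle) :
    ‖(k : ℂ)⁻¹ * ∑ j ∈ Finset.range k, (z : ℂ) ^ (n j)‖ ≤ 1 := by
  rw [norm_mul]
  have h1 : ‖∑ j ∈ Finset.range k, (z : ℂ) ^ (n j)‖ ≤ (k : ℝ) := by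
    refine (norm_sum_le _ _).trans ?_
    have : ∀ j ∈ Finset.range k, ‖(z : ℂ) ^ (n j)‖ = 1 := fun j _ => by
      rw [norm_pow]
      simp [Circle.norm_coe]
    rw [Finset.sum_congr rfl this]
    simp
  have h2 : ‖(k : ℂ)⁻¹‖ = (k : ℝ)⁻¹ := by
    rw [norm_inv, Complex.norm_natCast]
  rw [h2]
  rcases Nat.eq_zero_or_pos k with hk | hk
  · simp [hk]
  · have hkpos : (0:ℝ) < k := by exact_mod_cast hk
    calc (k:ℝ)⁻¹ * ‖∑ j ∈ Finset.range k, (z : ℂ) ^ (n j)‖ ≤ (k:ℝ)⁻¹ * k :=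
          mul_le_mul_of_nonneg_left h1 (by positivity)
      _ = 1 := inv_mul_cancel₀ (ne_of_gt hkpos)

lemma cesaro_limit_zero (μ : Measure Circle) [IsProbabilityMeasure μ]
    (H : ∀ n : ℕ → ℕ, StrictMono n → (∀ k, 0 < n k) →
      Tendsto (fun k : ℕ => ∫ z, ‖(k : ℂ)⁻¹ * ∑ j ∈ Finset.range k, (z : ℂ) ^ (n j)‖ ^ 2 ∂μ)
        atTop (nhds 0))
    (n : ℕ → ℕ) (hn : StrictMono n) (hpos : ∀ k, 0 < n k) (c : ℂ)
    (hc : Tendsto (fun k : ℕ => ∫ z, (z : ℂ) ^ ((n k : ℤ)) ∂μ) atTop (nhds c)) : c = 0 := by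
  set a : ℕ → ℂ := fun k => ∫ z, (z : ℂ) ^ ((n k : ℤ)) ∂μ with haDef
  have hces : Tendsto (fun k : ℕ => (k : ℝ)⁻¹ • ∑ i ∈ Finset.range k, a i) atTop (nhds c) :=
    hc.cesaro_smul
  have heq : ∀ k : ℕ, (k : ℝ)⁻¹ • ∑ i ∈ Finset.range k, a i
      = ∫ z, (k : ℂ)⁻¹ * ∑ j ∈ Finset.range k, (z : ℂ) ^ (n j) ∂μ := by
    intro k
    rw [integral_const_mul, integral_finset_sum _ fun j _ => intPow μ (n j)]
    rw [Complex.real_smul]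
    have hcast : (((k : ℝ)⁻¹ : ℝ) : ℂ) = (k : ℂ)⁻¹ := by push_cast; ring
    rw [hcast]
    simp only [haDef, zpow_natCast]
  have hb2 : Tendsto (fun k : ℕ => ‖(k : ℝ)⁻¹ • ∑ i ∈ Finset.range k, a i‖ ^ 2) atTop
      (nhds (‖c‖ ^ 2)) := (hces.norm).pow 2
  have hle : ∀ k : ℕ, ‖(k : ℝ)⁻¹ • ∑ i ∈ Finset.range k, a i‖ ^ 2
      ≤ ∫ z, ‖(k : ℂ)⁻¹ * ∑ j ∈ Finset.range k, (z : ℂ) ^ (n j)‖ ^ 2 ∂μ := by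
    intro k
    rw [heq k]
    refine sq_norm_int_le μ _ ?_ (bound_one k n)
    refine Continuous.aestronglyMeasurable ?_
    exact continuous_const.mul (continuous_finset_sum _ fun j _ => by
      simpa using contZpow ((n j : ℤ)))
  have hcle : ‖c‖ ^ 2 ≤ 0 := le_of_tendsto_of_tendsto' hb2 (H n hn hpos) hle
  have : ‖c‖ = 0 := by nlinarith [norm_nonneg c]
  exact norm_eq_zero.1 this

/-- Blum–Hanson: a Borel probability measure `μ` on the unit circle is Rajchman iff for every
strictly increasing sequence `(n_k)` of positive integers,
`∫ |(1/k) ∑_{j=1}^k z^{n_j}|² dμ(z) → 0` as `k → ∞`. -/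
theorem stmt2 (μ : Measure Circle) [IsProbabilityMeasure μ] :
    IsRajchman μ ↔
      ∀ n : ℕ → ℕ, StrictMono n → (∀ k, 0 < n k) →
        Tendsto
          (fun k : ℕ => ∫ z, ‖(k : ℂ)⁻¹ * ∑ j ∈ Finset.range k, (z : ℂ) ^ (n j)‖ ^ 2 ∂μ)
          atTop (nhds 0) := by
  constructor
  · intro hraj n hn _hpos
    simp only [keyId μ n]
    exact avg_tendsto _ (normFour μ) hraj n hn
  · intro H
    have hD : Tendsto (fun m : ℕ => ∫ z, (z : ℂ) ^ ((m : ℤ)) ∂μ) atTop (nhds 0) := by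
      by_contra hcon
      rw [Metric.tendsto_atTop] at hcon
      push_neg at hcon
      obtain ⟨ε, hε, hfreq⟩ := hcon
      have hfr : ∃ᶠ m : ℕ in atTop, 1 ≤ m ∧ ε ≤ ‖∫ z, (z : ℂ) ^ ((m : ℤ)) ∂μ‖ := by
        rw [frequently_atTop]
        intro N
        obtain ⟨m, hm1, hm2⟩ := hfreq (max N 1)
        refine ⟨m, le_trans (le_max_left _ _) hm1, le_trans (le_max_right _ _) hm1, ?_⟩
        rwa [dist_zero_right] at hm2
      obtain ⟨φ, hφmono, hφ⟩ := extraction_of_frequently_atTop hfr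
      set x : ℕ → ℂ := fun k => ∫ z, (z : ℂ) ^ ((φ k : ℤ)) ∂μ with hx
      have hbdd : ∀ k, x k ∈ Metric.closedBall (0:ℂ) 1 := fun k => by
        rw [Metric.mem_closedBall, dist_zero_right]
        exact normFour μ _
      obtain ⟨c, -, ψ, hψmono, hψ⟩ :=
        tendsto_subseq_of_bounded Metric.isBounded_closedBall hbdd
      have hc0 : c = 0 :=
        cesaro_limit_zero μ H (φ ∘ ψ) (hφmono.comp hψmono)
          (fun k => (hφ (ψ k)).1) c hψ
      have hεc : ε ≤ ‖c‖ :=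
        ge_of_tendsto' hψ.norm fun k => (hφ (ψ k)).2
      rw [hc0] at hεc
      simp only [norm_zero] at hεc
      linarith
    have hconj : ∀ m : ℤ, ∫ z, (z : ℂ) ^ (-m) ∂μ = (starRingEnd ℂ) (∫ z, (z : ℂ) ^ m ∂μ) := by
      intro m
      rw [← integral_conj]
      refine integral_congr_ae (Eventually.of_forall fun z => ?_)
      show (z : ℂ) ^ (-m) = (starRingEnd ℂ) ((z : ℂ) ^ m)
      rw [map_zpow₀, ← Circle.coe_inv_eq_conj, Circle.coe_inv, inv_zpow, ← zpow_neg]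
    have hTop : Tendsto (fun m : ℤ => ∫ z, (z : ℂ) ^ m ∂μ) atTop (nhds 0) := by
      rw [← Nat.map_cast_int_atTop, tendsto_map'_iff]
      exact hD
    have hBot : Tendsto (fun m : ℤ => ∫ z, (z : ℂ) ^ m ∂μ) atBot (nhds 0) := by
      have h1 : Tendsto (fun m : ℤ => (starRingEnd ℂ) (∫ z, (z : ℂ) ^ m ∂μ)) atTop (nhds 0) := by
        have := (Complex.continuous_conj.tendsto 0).comp hTop
        simpa [Function.comp_def] using this
      have h2 : Tendsto (fun m : ℤ => ∫ z, (z : ℂ) ^ (-m) ∂μ) atTop (nhds 0) := by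
        simp only [hconj]
        exact h1
      have h3 := h2.comp tendsto_neg_atBot_atTop
      simpa [Function.comp_def, neg_neg] using h3
    rw [IsRajchman, Int.cofinite_eq, tendsto_sup]
    exact ⟨hBot, hTop⟩
end

section
/- Let T be an invertible measure-preserving transformation of a probability space (X, ℬ, μ) and φ : X → ℝ/ℤ measurable. On X × (ℝ/ℤ) × (ℝ/ℤ), equipped with μ ⊗ λ ⊗ λ where λ is Lebesgue (Haar) measure on ℝ/ℤ, define T̄(x, y, z) = (Tx, y + φ(x), z + y), and let F(x, y, z) = χ_{[0,1/2)}(z) − χ_{[1/2,1)}(z) (identifying ℝ/ℤ with [0,1)). Then ∫ F∘T̄ⁿ · F d(μ⊗λ⊗λ) = 0 for every integer n ≠ 0; that is, the spectral measure of F with respect to T̄ is exactly Lebesgue measure on the circle. -/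
open MeasureTheory

/-- The 2-step group extension `T̄(x, y, z) = (Tx, y + φ(x), z + y)` of `T` on
`X × (ℝ/ℤ) × (ℝ/ℤ)`. -/
noncomputable def glasnerExt {X : Type*} (T : Equiv.Perm X) (φ : X → AddCircle (1 : ℝ)) :
    Equiv.Perm (X × (AddCircle (1 : ℝ) × AddCircle (1 : ℝ))) where
  toFun p := (T p.1, (p.2.1 + φ p.1, p.2.2 + p.2.1))
  invFun p := (T.symm p.1, (p.2.1 - φ (T.symm p.1), p.2.2 - (p.2.1 - φ (T.symm p.1))))
  left_inv := by rintro ⟨x, y, z⟩; simp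
  right_inv := by rintro ⟨x, y, z⟩; simp

/-- The image of `[0, 1/2)` in `ℝ/ℤ`. -/
noncomputable def halfArc : Set (AddCircle (1 : ℝ)) :=
  (fun t : ℝ => (t : AddCircle (1 : ℝ))) '' Set.Ico (0 : ℝ) (1 / 2)

/-- `F(x, y, z) = χ_{[0,1/2)}(z) − χ_{[1/2,1)}(z)`. -/
noncomputable def Fz {X : Type*} (p : X × (AddCircle (1 : ℝ) × AddCircle (1 : ℝ))) : ℝ :=
  halfArc.indicator (fun _ => (1 : ℝ)) p.2.2 - halfArcᶜ.indicator (fun _ => (1 : ℝ)) p.2.2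

/-- The single-variable version of `Fz`. -/
noncomputable def hfun (w : AddCircle (1 : ℝ)) : ℝ :=
  halfArc.indicator (fun _ => (1 : ℝ)) w - halfArcᶜ.indicator (fun _ => (1 : ℝ)) w

lemma Fz_eq_hfun {X : Type*} (p : X × (AddCircle (1 : ℝ) × AddCircle (1 : ℝ))) :
    Fz p = hfun p.2.2 := rfl

lemma measurableSet_halfArc : MeasurableSet halfArc := by
  have key : halfArc = (AddCircle.measurableEquivIco (T := (1:ℝ)) 0) ⁻¹'
      {x : Set.Ico (0:ℝ) (0 + 1) | (x : ℝ) < 1 / 2} := by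
    ext q
    constructor
    · rintro ⟨s, ⟨hs0, hs2⟩, rfl⟩
      have hmem : s ∈ Set.Ico (0:ℝ) (0 + 1) := ⟨hs0, by norm_num; linarith⟩
      have : AddCircle.equivIco 1 0 ((s : AddCircle (1:ℝ))) = ⟨s, hmem⟩ :=
        ((AddCircle.equivIco 1 0).apply_eq_iff_eq_symm_apply).mpr rfl
      show ((AddCircle.equivIco 1 0 ((s : AddCircle (1:ℝ)))) : ℝ) < 1 / 2
      rw [this]
      exact hs2
    · intro hq
      have h2 : ((AddCircle.equivIco 1 0 q : ℝ) : AddCircle (1:ℝ)) = q :=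
        (AddCircle.equivIco 1 0).symm_apply_apply q
      refine ⟨(AddCircle.equivIco 1 0 q : ℝ), ⟨?_, hq⟩, h2⟩
      have := (AddCircle.equivIco 1 0 q).2.1
      simpa using this
  rw [key]
  exact (AddCircle.measurableEquivIco (T := (1:ℝ)) 0).measurable
    (measurable_subtype_coe measurableSet_Iio)

lemma volume_halfArc : volume halfArc = ENNReal.ofReal (1 / 2) := by
  have := AddCircle.add_projection_respects_measure (T := (1:ℝ)) (-(1/2)) measurableSet_halfArc
  rw [this]
  have hset : (QuotientAddGroup.mk ⁻¹' halfArc ∩ Set.Ioc (-(1/2)) (-(1/2) + 1) : Set ℝ)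
      = Set.Ico (0 : ℝ) (1 / 2) := by
    ext t
    simp only [Set.mem_inter_iff, Set.mem_preimage, Set.mem_Ioc, Set.mem_Ico]
    constructor
    · rintro ⟨hmem, ht1, ht2⟩
      obtain ⟨s, ⟨hs0, hs2⟩, hst⟩ := hmem
      have hsub : s - t ∈ AddSubgroup.zmultiples (1 : ℝ) :=
        QuotientAddGroup.eq_iff_sub_mem.mp hst
      obtain ⟨k, hk⟩ := AddSubgroup.mem_zmultiples_iff.mp hsub
      rw [zsmul_eq_mul, mul_one] at hk
      have hk1 : (k : ℝ) < 1 := by rw [hk]; linarith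
      have hk2 : (-1 : ℝ) < k := by rw [hk]; linarith
      have hk0 : k = 0 := by
        have h1 : k < 1 := by exact_mod_cast hk1
        have h2 : (-1 : ℤ) < k := by exact_mod_cast hk2
        omega
      rw [hk0] at hk
      simp only [Int.cast_zero] at hk
      have hst' : s = t := by linarith
      rw [hst'] at hs0 hs2
      exact ⟨hs0, hs2⟩
    · rintro ⟨ht0, ht2⟩
      exact ⟨⟨t, ⟨ht0, ht2⟩, rfl⟩, by linarith, by linarith⟩
  rw [hset, Real.volume_Ico]
  norm_num

lemma volume_halfArc_compl : volume halfArcᶜ = ENNReal.ofReal (1 / 2) := by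
  have huniv : volume (Set.univ : Set (AddCircle (1:ℝ))) = 1 := by
    rw [AddCircle.measure_univ]; norm_num
  rw [measure_compl measurableSet_halfArc (measure_ne_top _ _), huniv, volume_halfArc]
  rw [show (1 : ENNReal) = ENNReal.ofReal 1 by simp, ← ENNReal.ofReal_sub _ (by norm_num)]
  norm_num

lemma measurable_hfun : Measurable hfun :=
  ((measurable_const.indicator measurableSet_halfArc).sub
    (measurable_const.indicator measurableSet_halfArc.compl))

lemma norm_hfun_le (w : AddCircle (1:ℝ)) : ‖hfun w‖ ≤ 1 := by
  unfold hfun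
  by_cases h : w ∈ halfArc
  · simp [Set.indicator_of_mem h, Set.indicator_of_notMem (by simpa using h :
      w ∉ halfArcᶜ)]
  · simp [Set.indicator_of_notMem h, Set.indicator_of_mem (by simpa using h :
      w ∈ halfArcᶜ)]

lemma integral_hfun : ∫ w, hfun w ∂(volume : Measure (AddCircle (1:ℝ))) = 0 := by
  unfold hfun
  rw [integral_sub]
  · rw [integral_indicator_const (1:ℝ) measurableSet_halfArc,
      integral_indicator_const (1:ℝ) measurableSet_halfArc.compl,
      measureReal_def, measureReal_def, volume_halfArc, volume_halfArc_compl]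
    simp
  · exact (integrable_const (1:ℝ)).indicator measurableSet_halfArc
  · exact (integrable_const (1:ℝ)).indicator measurableSet_halfArc.compl

/-- Structure of the iterates of the Glasner extension: the fiber coordinates evolve as
`(y, z) ↦ (y + a(x), z + n • y + b(x))`. -/
lemma glasnerExt_zpow {X : Type*} [MeasurableSpace X] (T : Equiv.Perm X)
    (hT : Measurable T) (hTs : Measurable (T.symm : X → X))
    (φ : X → AddCircle (1 : ℝ)) (hφ : Measurable φ) (n : ℤ) :
    ∃ c : X → X, ∃ a b : X → AddCircle (1 : ℝ),
      Measurable c ∧ Measurable a ∧ Measurable b ∧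
      ∀ x y z, (glasnerExt T φ ^ n) (x, (y, z)) = (c x, (y + a x, z + n • y + b x)) := by
  induction n using Int.induction_on with
  | zero =>
    refine ⟨id, fun _ => 0, fun _ => 0, measurable_id, measurable_const, measurable_const, ?_⟩
    intro x y z
    simp
  | succ k ih =>
    obtain ⟨c, a, b, hc, ha, hb, hfor⟩ := ih
    refine ⟨fun x => c (T x), fun x => φ x + a (T x), fun x => (k : ℤ) • φ x + b (T x),
      hc.comp hT, hφ.add (ha.comp hT),
      (((continuous_zsmul (k : ℤ)).measurable).comp hφ).add (hb.comp hT), ?_⟩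
    intro x y z
    have hstep : (glasnerExt T φ ^ ((k : ℤ) + 1)) (x, (y, z))
        = (glasnerExt T φ ^ (k : ℤ)) (glasnerExt T φ (x, (y, z))) := by
      rw [zpow_add_one]; rfl
    rw [hstep]
    show (glasnerExt T φ ^ (k : ℤ)) (T x, (y + φ x, z + y)) = _
    rw [hfor]
    simp only [Prod.mk.injEq]
    refine ⟨trivial, by abel, ?_⟩
    simp only [smul_add, add_smul, one_smul]
    abel
  | pred k ih =>
    obtain ⟨c, a, b, hc, ha, hb, hfor⟩ := ih
    refine ⟨fun x => c (T.symm x), fun x => a (T.symm x) - φ (T.symm x),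
      fun x => ((k : ℤ) + 1) • φ (T.symm x) + b (T.symm x),
      hc.comp hTs, (ha.comp hTs).sub (hφ.comp hTs),
      (((continuous_zsmul ((k : ℤ) + 1)).measurable).comp (hφ.comp hTs)).add (hb.comp hTs), ?_⟩
    intro x y z
    have hstep : (glasnerExt T φ ^ (-(k : ℤ) - 1)) (x, (y, z))
        = (glasnerExt T φ ^ (-(k : ℤ))) ((glasnerExt T φ)⁻¹ (x, (y, z))) := by
      rw [zpow_sub_one]; rfl
    rw [hstep]
    show (glasnerExt T φ ^ (-(k : ℤ)))
        (T.symm x, (y - φ (T.symm x), z - (y - φ (T.symm x)))) = _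
    rw [hfor]
    simp only [Prod.mk.injEq]
    refine ⟨trivial, by abel, ?_⟩
    simp only [smul_sub, sub_smul, add_smul, one_smul, neg_smul]
    abel

lemma integral_hfun_comp_affine (n : ℤ) (hn : n ≠ 0) (c : AddCircle (1:ℝ)) :
    ∫ y, hfun (c + n • y) ∂(volume : Measure (AddCircle (1:ℝ))) = 0 := by
  have hmp : MeasurePreserving (fun y : AddCircle (1:ℝ) => c + n • y) volume volume :=
    (measurePreserving_add_left volume c).comp
      (Measure.measurePreserving_zsmul volume hn)
  calc ∫ y, hfun (c + n • y) ∂(volume : Measure (AddCircle (1:ℝ)))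
      = ∫ w, hfun w ∂((volume : Measure (AddCircle (1:ℝ))).map
          (fun y => c + n • y)) := by
        rw [integral_map hmp.measurable.aemeasurable
          (measurable_hfun.aestronglyMeasurable)]
    _ = 0 := by rw [hmp.map_eq]; exact integral_hfun

/-- For the extension `T̄(x, y, z) = (Tx, y + φ(x), z + y)` and
`F(x, y, z) = χ_{[0,1/2)}(z) − χ_{[1/2,1)}(z)` one has `∫ F∘T̄ⁿ · F = 0` for all `n ≠ 0`;
that is, the spectral measure of `F` is exactly Lebesgue measure on the circle. -/
theorem stmt13 {X : Type*} [MeasurableSpace X] (μ : Measure X) [IsProbabilityMeasure μ]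
    (T : Equiv.Perm X) (hT : MeasurePreserving T μ μ)
    (hTsymm : MeasurePreserving T.symm μ μ)
    (φ : X → AddCircle (1 : ℝ)) (hφ : Measurable φ) :
    ∀ n : ℤ, n ≠ 0 →
      ∫ p, Fz ((glasnerExt T φ ^ n) p) * Fz p
          ∂(μ.prod ((volume : Measure (AddCircle (1 : ℝ))).prod volume)) = 0 := by
  intro n hn
  obtain ⟨c, a, b, hc, ha, hb, hfor⟩ := glasnerExt_zpow T hT.measurable hTsymm.measurable φ hφ n
  set ν : Measure (AddCircle (1:ℝ)) := volume with hν
  set f : X × (AddCircle (1:ℝ) × AddCircle (1:ℝ)) → ℝ :=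
    fun p => hfun (p.2.2 + n • p.2.1 + b p.1) * hfun p.2.2 with hf
  have hfeq : ∀ p, Fz ((glasnerExt T φ ^ n) p) * Fz p = f p := by
    rintro ⟨x, y, z⟩
    rw [hfor x y z, Fz_eq_hfun, Fz_eq_hfun]
  have hmes : Measurable f := by
    apply Measurable.mul
    · exact measurable_hfun.comp
        ((measurable_snd.snd.add
          (((continuous_zsmul n).measurable).comp measurable_snd.fst)).add
          (hb.comp measurable_fst))
    · exact measurable_hfun.comp measurable_snd.snd
  have hbound : ∀ p, ‖f p‖ ≤ 1 := by
    intro p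
    rw [hf]
    simp only [norm_mul]
    calc ‖hfun (p.2.2 + n • p.2.1 + b p.1)‖ * ‖hfun p.2.2‖
        ≤ 1 * 1 := mul_le_mul (norm_hfun_le _) (norm_hfun_le _) (norm_nonneg _) zero_le_one
      _ = 1 := by norm_num
  have hint : Integrable f (μ.prod (ν.prod ν)) :=
    (integrable_const (1:ℝ)).mono' hmes.aestronglyMeasurable (Filter.Eventually.of_forall hbound)
  rw [integral_congr_ae (Filter.Eventually.of_forall hfeq), integral_prod _ hint]
  have hinner : ∀ x, ∫ q : AddCircle (1:ℝ) × AddCircle (1:ℝ), f (x, q) ∂(ν.prod ν) = 0 := by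
    intro x
    set g : AddCircle (1:ℝ) → AddCircle (1:ℝ) → ℝ :=
      fun y z => hfun (z + n • y + b x) * hfun z with hg
    have hgmes : Measurable (Function.uncurry g) := by
      apply Measurable.mul
      · exact measurable_hfun.comp
          ((measurable_snd.add
            (((continuous_zsmul n).measurable).comp measurable_fst)).add measurable_const)
      · exact measurable_hfun.comp measurable_snd
    have hgint : Integrable (Function.uncurry g) (ν.prod ν) := by
      refine (integrable_const (1:ℝ)).mono' hgmes.aestronglyMeasurable
        (Filter.Eventually.of_forall ?_)
      rintro ⟨y, z⟩
      simp only [Function.uncurry, hg, norm_mul]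
      calc ‖hfun (z + n • y + b x)‖ * ‖hfun z‖
          ≤ 1 * 1 := mul_le_mul (norm_hfun_le _) (norm_hfun_le _) (norm_nonneg _) zero_le_one
        _ = 1 := by norm_num
    have h1 : ∫ q : AddCircle (1:ℝ) × AddCircle (1:ℝ), f (x, q) ∂(ν.prod ν)
        = ∫ q : AddCircle (1:ℝ) × AddCircle (1:ℝ), Function.uncurry g q ∂(ν.prod ν) := rfl
    rw [h1, integral_prod _ hgint]
    simp only [Function.uncurry_apply_pair]
    have h2 : (∫ y, ∫ z, g y z ∂ν ∂ν) = ∫ z, ∫ y, g y z ∂ν ∂ν :=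
      integral_integral_swap hgint
    rw [h2]
    have h3 : ∀ z : AddCircle (1:ℝ), ∫ y, g y z ∂ν = 0 := by
      intro z
      rw [hg]
      simp only
      rw [integral_mul_const]
      have h4 : ∀ y : AddCircle (1:ℝ), z + n • y + b x = (z + b x) + n • y := by
        intro y; abel
      simp_rw [h4]
      rw [integral_hfun_comp_affine n hn (z + b x)]
      ring
    simp_rw [h3]
    exact integral_zero _ _
  simp_rw [hinner]
  exact integral_zero _ _
end
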